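/- Let C be the 4-dimensional k-algebra given as the quotient of the free associative k-algebra on generators f₁, f₂, x, y by the relations f₁² = f₁, f₂² = f₂, f₁f₂ = f₂f₁ = 0, f₁ + f₂ = 1, x = f₂xf₁, y = f₁yf₂, xy = 0, yx = 0 (the path algebra of the quiver with two vertices and arrows x : 1 → 2, y : 2 → 1 modulo the relations xy and yx). Then for e = e₁ + e₂ ∈ A₂ the corner algebra eA₂e is isomorphic to C as a k-algebra, and likewise for e = e₂ + e₃ ∈ A₂ the corner algebra eA₂e is isomorphic to C. -/

import Mathlib

/-! The gentle algebra `A₂` of Kalck's paper, defined by generators and relations. -/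

/-- Generators of the algebra `A₂`: three idempotents `e₁, e₂, e₃` and
arrows `β, γ : 3 → 1`, `α₂ : 1 → 2`, `α₁ : 2 → 3`. -/
inductive A2Gen : Type
  | e : Fin 3 → A2Gen
  | β : A2Gen
  | γ : A2Gen
  | α₁ : A2Gen
  | α₂ : A2Gen
  deriving DecidableEq

variable (k : Type*) [Field k]

open FreeAlgebra

/-- Defining relations of the algebra `A₂`. -/
inductive A2Rel : FreeAlgebra k A2Gen → FreeAlgebra k A2Gen → Prop
  | orth (i j : Fin 3) :
      A2Rel (ι k (A2Gen.e i) * ι k (A2Gen.e j)) (if i = j then ι k (A2Gen.e i) else 0)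
  | sum : A2Rel (ι k (A2Gen.e 0) + ι k (A2Gen.e 1) + ι k (A2Gen.e 2)) 1
  | beta : A2Rel (ι k (A2Gen.e 0) * ι k A2Gen.β * ι k (A2Gen.e 2)) (ι k A2Gen.β)
  | gamma : A2Rel (ι k (A2Gen.e 0) * ι k A2Gen.γ * ι k (A2Gen.e 2)) (ι k A2Gen.γ)
  | alpha₂ : A2Rel (ι k (A2Gen.e 1) * ι k A2Gen.α₂ * ι k (A2Gen.e 0)) (ι k A2Gen.α₂)
  | alpha₁ : A2Rel (ι k (A2Gen.e 2) * ι k A2Gen.α₁ * ι k (A2Gen.e 1)) (ι k A2Gen.α₁)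
  | rel₁ : A2Rel (ι k A2Gen.α₂ * ι k A2Gen.β) 0
  | rel₂ : A2Rel (ι k A2Gen.γ * ι k A2Gen.α₁) 0
  | rel₃ : A2Rel (ι k A2Gen.α₁ * ι k A2Gen.α₂) 0

/-- The gentle algebra `A₂ = kQ₂/I₂`. -/
abbrev A2 : Type _ := RingQuot (A2Rel k)

namespace A2

/-- The image of a generator in `A₂`. -/
def gen (g : A2Gen) : A2 k := RingQuot.mkAlgHom k (A2Rel k) (ι k g)

/-- The idempotent `eᵢ` of `A₂` (indexed by `i : Fin 3`, so `e₁ = ee 0` etc). -/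
def ee (i : Fin 3) : A2 k := gen k (A2Gen.e i)

/-- The algebra homomorphism `A₂ → k` corresponding to the one-dimensional simple
module `Sᵢ`: the idempotent `eᵢ` acts as the identity, all other generators act by zero. -/
noncomputable def φ (i : Fin 3) : A2 k →ₐ[k] k :=
  RingQuot.liftAlgHom k
    ⟨FreeAlgebra.lift k (fun g => if g = A2Gen.e i then (1 : k) else 0), by
      rintro x y h
      induction h with
      | orth i' j' =>
          simp only [map_mul, apply_ite, map_zero, FreeAlgebra.lift_ι_apply]
          by_cases hij : i' = j'
          · subst hij; by_cases h : i' = i <;> simp [h]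
          · by_cases h1 : i' = i <;> by_cases h2 : j' = i <;> simp_all
      | sum => fin_cases i <;> simp
      | _ => simp⟩

/-- The simple left `A₂`-module `Sᵢ` (a type synonym for `k`). -/
def S (_i : Fin 3) : Type _ := k

noncomputable instance (i : Fin 3) : AddCommGroup (S k i) :=
  inferInstanceAs (AddCommGroup k)

noncomputable instance (i : Fin 3) : Module k (S k i) := inferInstanceAs (Module k k)

noncomputable instance (i : Fin 3) : Module (A2 k) (S k i) :=
  Module.compHom k (φ k i).toRingHom

end A2

namespace A2

variable {K : Type*} [Field K]

lemma rel_eq {x y : FreeAlgebra K A2Gen} (h : A2Rel K x y) :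
    RingQuot.mkAlgHom K (A2Rel K) x = RingQuot.mkAlgHom K (A2Rel K) y :=
  RingQuot.mkAlgHom_rel K h

lemma ee_mul_ee (i j : Fin 3) : ee K i * ee K j = if i = j then ee K i else 0 := by
  have := rel_eq (A2Rel.orth (k := K) i j)
  simpa [gen, ee, apply_ite, map_mul] using this

lemma idem_ee_add_ee {i j : Fin 3} (hij : i ≠ j) :
    (ee K i + ee K j) * (ee K i + ee K j) = ee K i + ee K j := by
  simp [mul_add, add_mul, ee_mul_ee, hij, hij.symm]

end A2

/-! The corner ring `eAe` of a ring `A` at an idempotent `e`: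
the set `{eae : a ∈ A}`, with operations induced from `A` and unit `e`. -/

/-- An idempotent element of a ring, bundled with the proof of idempotency. -/
structure Idem (A : Type*) [Ring A] where
  /-- the underlying element -/
  e : A
  /-- idempotency -/
  idem : e * e = e

variable {A : Type*} [Ring A]

/-- The corner `eAe` of the ring `A` at the idempotent `e`, as a type:
its elements are the `x : A` with `e * x * e = x`, i.e. exactly the elements
of the subset `eAe ⊆ A`. -/
def Corner (E : Idem A) : Type _ := {x : A // E.e * x * E.e = x}

namespace Corner

variable {E : Idem A}

instance : Add (Corner E) :=
  ⟨fun x y => ⟨x.1 + y.1, by rw [mul_add, add_mul, x.2, y.2]⟩⟩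

instance : Zero (Corner E) := ⟨⟨0, by simp⟩⟩

instance : Neg (Corner E) :=
  ⟨fun x => ⟨-x.1, by rw [mul_neg, neg_mul, x.2]⟩⟩

instance : Sub (Corner E) :=
  ⟨fun x y => ⟨x.1 - y.1, by rw [mul_sub, sub_mul, x.2, y.2]⟩⟩

instance : SMul ℕ (Corner E) :=
  ⟨fun n x => ⟨n • x.1, by rw [mul_smul_comm, smul_mul_assoc, x.2]⟩⟩

instance : SMul ℤ (Corner E) :=
  ⟨fun n x => ⟨n • x.1, by rw [mul_smul_comm, smul_mul_assoc, x.2]⟩⟩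

private lemma aux_left {e x : A} (he : e * e = e) (hx : e * x * e = x) : e * x = x := by
  conv_lhs => rw [← hx]
  rw [← mul_assoc, ← mul_assoc, he, hx]

private lemma aux_right {e x : A} (he : e * e = e) (hx : e * x * e = x) : x * e = x := by
  conv_lhs => rw [← hx]
  rw [mul_assoc, he, hx]

instance : Mul (Corner E) :=
  ⟨fun x y => ⟨x.1 * y.1, by
    rw [← mul_assoc, aux_left E.idem x.2, mul_assoc, aux_right E.idem y.2]⟩⟩

instance : One (Corner E) := ⟨⟨E.e, by rw [E.idem, E.idem]⟩⟩

instance : AddCommGroup (Corner E) :=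
  Function.Injective.addCommGroup (fun x : Corner E => x.1) Subtype.val_injective
    rfl (fun _ _ => rfl) (fun _ => rfl) (fun _ _ => rfl) (fun _ _ => rfl) (fun _ _ => rfl)

lemma e_mul_val (x : Corner E) : E.e * x.1 = x.1 := aux_left E.idem x.2

lemma val_mul_e (x : Corner E) : x.1 * E.e = x.1 := aux_right E.idem x.2

instance : Ring (Corner E) where
  __ := (inferInstance : AddCommGroup (Corner E))
  mul := (· * ·)
  one := 1
  mul_assoc x y z := Subtype.ext (mul_assoc x.1 y.1 z.1)
  one_mul x := Subtype.ext (e_mul_val x)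
  mul_one x := Subtype.ext (val_mul_e x)
  left_distrib x y z := Subtype.ext (mul_add x.1 y.1 z.1)
  right_distrib x y z := Subtype.ext (add_mul x.1 y.1 z.1)
  zero_mul x := Subtype.ext (zero_mul x.1)
  mul_zero x := Subtype.ext (mul_zero x.1)

section Algebra

variable {k : Type*} [CommSemiring k] [Algebra k A]

instance : SMul k (Corner E) :=
  ⟨fun c x => ⟨c • x.1, by rw [mul_smul_comm, smul_mul_assoc, x.2]⟩⟩

instance : Module k (Corner E) :=
  Function.Injective.module k
    ⟨⟨fun x : Corner E => x.1, rfl⟩, fun _ _ => rfl⟩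
    Subtype.val_injective (fun _ _ => rfl)

instance : Algebra k (Corner E) :=
  Algebra.ofModule
    (fun c x y => Subtype.ext (smul_mul_assoc c x.1 y.1))
    (fun c x y => Subtype.ext (mul_smul_comm c x.1 y.1))

end Algebra

end Corner

open FreeAlgebra

/-- Generators of the algebra `C`: two idempotents `f₁, f₂` and arrows
`x : 1 → 2`, `y : 2 → 1`. -/
inductive CGen : Type
  | f : Fin 2 → CGen
  | x : CGen
  | y : CGen
  deriving DecidableEq

/-- Defining relations of the algebra `C`: `f₁, f₂` are orthogonal idempotents with
`f₁ + f₂ = 1`, `x = f₂xf₁`, `y = f₁yf₂`, and `xy = 0`, `yx = 0`. -/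
inductive CRel : FreeAlgebra k CGen → FreeAlgebra k CGen → Prop
  | orth (i j : Fin 2) :
      CRel (ι k (CGen.f i) * ι k (CGen.f j)) (if i = j then ι k (CGen.f i) else 0)
  | sum : CRel (ι k (CGen.f 0) + ι k (CGen.f 1)) 1
  | hx : CRel (ι k (CGen.f 1) * ι k CGen.x * ι k (CGen.f 0)) (ι k CGen.x)
  | hy : CRel (ι k (CGen.f 0) * ι k CGen.y * ι k (CGen.f 1)) (ι k CGen.y)
  | hxy : CRel (ι k CGen.x * ι k CGen.y) 0
  | hyx : CRel (ι k CGen.y * ι k CGen.x) 0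

/-- The 4-dimensional algebra `C`: the path algebra of the quiver with two vertices
and arrows `x : 1 → 2`, `y : 2 → 1`, modulo the relations `xy` and `yx`. -/
abbrev Calg : Type _ := RingQuot (CRel k)

/-- The idempotent `e = e₁ + e₂` of `A₂`, bundled with its idempotency. -/
noncomputable def A2.E12 : Idem (A2 k) :=
  ⟨A2.ee k 0 + A2.ee k 1, A2.idem_ee_add_ee (Fin.ne_of_val_ne (by simp))⟩

/-- The idempotent `e = e₂ + e₃` of `A₂`, bundled with its idempotency. -/
noncomputable def A2.E23 : Idem (A2 k) :=
  ⟨A2.ee k 1 + A2.ee k 2, A2.idem_ee_add_ee (Fin.ne_of_val_ne (by simp))⟩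
namespace A2

variable {K : Type*} [Field K]

/-- The arrow `β` in `A₂`. -/
noncomputable def bb : A2 K := gen K A2Gen.β
/-- The arrow `γ` in `A₂`. -/
noncomputable def gg : A2 K := gen K A2Gen.γ
/-- The arrow `α₁` in `A₂`. -/
noncomputable def a1 : A2 K := gen K A2Gen.α₁
/-- The arrow `α₂` in `A₂`. -/
noncomputable def a2 : A2 K := gen K A2Gen.α₂
/-- The path `β α₁`. -/
noncomputable def pB : A2 K := bb * a1
/-- The path `α₂ γ`. -/
noncomputable def qB : A2 K := a2 * gg

lemma ee_sum : (ee K 0 + ee K 1 + ee K 2) = 1 := by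
  simpa [gen, ee, map_add] using rel_eq (A2Rel.sum (k := K))

lemma sandwich_bb : ee K 0 * bb * ee K 2 = (bb : A2 K) := by
  simpa [gen, ee, bb, map_mul] using rel_eq (A2Rel.beta (k := K))

lemma sandwich_gg : ee K 0 * gg * ee K 2 = (gg : A2 K) := by
  simpa [gen, ee, gg, map_mul] using rel_eq (A2Rel.gamma (k := K))

lemma sandwich_a2 : ee K 1 * a2 * ee K 0 = (a2 : A2 K) := by
  simpa [gen, ee, a2, map_mul] using rel_eq (A2Rel.alpha₂ (k := K))

lemma sandwich_a1 : ee K 2 * a1 * ee K 1 = (a1 : A2 K) := by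
  simpa [gen, ee, a1, map_mul] using rel_eq (A2Rel.alpha₁ (k := K))

lemma a2_mul_bb : (a2 : A2 K) * bb = 0 := by
  simpa [gen, a2, bb, map_mul] using rel_eq (A2Rel.rel₁ (k := K))

lemma gg_mul_a1 : (gg : A2 K) * a1 = 0 := by
  simpa [gen, gg, a1, map_mul] using rel_eq (A2Rel.rel₂ (k := K))

lemma a1_mul_a2 : (a1 : A2 K) * a2 = 0 := by
  simpa [gen, a1, a2, map_mul] using rel_eq (A2Rel.rel₃ (k := K))

section absorb

private lemma ee_mul_of_sandwich {x : A2 K} {s t : Fin 3}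
    (h : ee K t * x * ee K s = x) (i : Fin 3) :
    ee K i * x = if i = t then x else 0 := by
  conv_lhs => rw [← h]
  rw [← mul_assoc, ← mul_assoc, ee_mul_ee]
  by_cases hi : i = t
  · rw [if_pos hi, if_pos hi, hi]; exact h
  · rw [if_neg hi, if_neg hi, zero_mul, zero_mul]

private lemma mul_ee_of_sandwich {x : A2 K} {s t : Fin 3}
    (h : ee K t * x * ee K s = x) (j : Fin 3) :
    x * ee K j = if j = s then x else 0 := by
  conv_lhs => rw [← h]
  rw [mul_assoc, ee_mul_ee]
  by_cases hj : s = j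
  · rw [if_pos hj, if_pos hj.symm]; exact h
  · rw [if_neg hj, if_neg (fun hh => hj hh.symm), mul_zero]

@[simp] lemma ee_mul_bb (i : Fin 3) : ee K i * bb = if i = 0 then (bb : A2 K) else 0 :=
  ee_mul_of_sandwich sandwich_bb i

@[simp] lemma bb_mul_ee (j : Fin 3) : (bb : A2 K) * ee K j = if j = 2 then bb else 0 :=
  mul_ee_of_sandwich sandwich_bb j

@[simp] lemma ee_mul_gg (i : Fin 3) : ee K i * gg = if i = 0 then (gg : A2 K) else 0 :=
  ee_mul_of_sandwich sandwich_gg i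

@[simp] lemma gg_mul_ee (j : Fin 3) : (gg : A2 K) * ee K j = if j = 2 then gg else 0 :=
  mul_ee_of_sandwich sandwich_gg j

@[simp] lemma ee_mul_a2 (i : Fin 3) : ee K i * a2 = if i = 1 then (a2 : A2 K) else 0 :=
  ee_mul_of_sandwich sandwich_a2 i

@[simp] lemma a2_mul_ee (j : Fin 3) : (a2 : A2 K) * ee K j = if j = 0 then a2 else 0 :=
  mul_ee_of_sandwich sandwich_a2 j

@[simp] lemma ee_mul_a1 (i : Fin 3) : ee K i * a1 = if i = 2 then (a1 : A2 K) else 0 :=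
  ee_mul_of_sandwich sandwich_a1 i

@[simp] lemma a1_mul_ee (j : Fin 3) : (a1 : A2 K) * ee K j = if j = 1 then a1 else 0 :=
  mul_ee_of_sandwich sandwich_a1 j

@[simp] lemma ee_mul_pB (i : Fin 3) : ee K i * pB = if i = 0 then (pB : A2 K) else 0 := by
  rw [pB, ← mul_assoc, ee_mul_bb]; split <;> simp

@[simp] lemma pB_mul_ee (j : Fin 3) : (pB : A2 K) * ee K j = if j = 1 then pB else 0 := by
  rw [pB, mul_assoc, a1_mul_ee]; split <;> simp

@[simp] lemma ee_mul_qB (i : Fin 3) : ee K i * qB = if i = 1 then (qB : A2 K) else 0 := by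
  rw [qB, ← mul_assoc, ee_mul_a2]; split <;> simp

@[simp] lemma qB_mul_ee (j : Fin 3) : (qB : A2 K) * ee K j = if j = 2 then qB else 0 := by
  rw [qB, mul_assoc, gg_mul_ee]; split <;> simp

end absorb

section products

private lemma mul_eq_zero_mismatch {x y : A2 K} {n m : Fin 3}
    (h1 : x * ee K n = x) (h2 : ee K m * y = y) (hnm : n ≠ m) : x * y = 0 := by
  rw [← h1, ← h2, mul_assoc, ← mul_assoc (ee K n), ee_mul_ee, if_neg hnm, zero_mul, mul_zero]

-- right/left absorption at specific idempotents
private lemma bbr : (bb : A2 K) * ee K 2 = bb := by simp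
private lemma bbl : ee K 0 * (bb : A2 K) = bb := by simp
private lemma ggr : (gg : A2 K) * ee K 2 = gg := by simp
private lemma ggl : ee K 0 * (gg : A2 K) = gg := by simp
private lemma a1r : (a1 : A2 K) * ee K 1 = a1 := by simp
private lemma a1l : ee K 2 * (a1 : A2 K) = a1 := by simp
private lemma a2r : (a2 : A2 K) * ee K 0 = a2 := by simp
private lemma a2l : ee K 1 * (a2 : A2 K) = a2 := by simp
private lemma pBr : (pB : A2 K) * ee K 1 = pB := by simp
private lemma pBl : ee K 0 * (pB : A2 K) = pB := by simp
private lemma qBr : (qB : A2 K) * ee K 2 = qB := by simp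
private lemma qBl : ee K 1 * (qB : A2 K) = qB := by simp

-- the 36 pairwise products of the six non-idempotent monomials
@[simp] lemma bb_mul_bb : (bb : A2 K) * bb = 0 := mul_eq_zero_mismatch bbr bbl (by decide)
@[simp] lemma bb_mul_gg : (bb : A2 K) * gg = 0 := mul_eq_zero_mismatch bbr ggl (by decide)
@[simp] lemma bb_mul_a1 : (bb : A2 K) * a1 = pB := rfl
@[simp] lemma bb_mul_a2 : (bb : A2 K) * a2 = 0 := mul_eq_zero_mismatch bbr a2l (by decide)
@[simp] lemma bb_mul_pB : (bb : A2 K) * pB = 0 := mul_eq_zero_mismatch bbr pBl (by decide)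
@[simp] lemma bb_mul_qB : (bb : A2 K) * qB = 0 := mul_eq_zero_mismatch bbr qBl (by decide)
@[simp] lemma gg_mul_bb : (gg : A2 K) * bb = 0 := mul_eq_zero_mismatch ggr bbl (by decide)
@[simp] lemma gg_mul_gg : (gg : A2 K) * gg = 0 := mul_eq_zero_mismatch ggr ggl (by decide)
attribute [simp] gg_mul_a1
@[simp] lemma gg_mul_a2 : (gg : A2 K) * a2 = 0 := mul_eq_zero_mismatch ggr a2l (by decide)
@[simp] lemma gg_mul_pB : (gg : A2 K) * pB = 0 := mul_eq_zero_mismatch ggr pBl (by decide)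
@[simp] lemma gg_mul_qB : (gg : A2 K) * qB = 0 := mul_eq_zero_mismatch ggr qBl (by decide)
@[simp] lemma a1_mul_bb : (a1 : A2 K) * bb = 0 := mul_eq_zero_mismatch a1r bbl (by decide)
@[simp] lemma a1_mul_gg : (a1 : A2 K) * gg = 0 := mul_eq_zero_mismatch a1r ggl (by decide)
@[simp] lemma a1_mul_a1 : (a1 : A2 K) * a1 = 0 := mul_eq_zero_mismatch a1r a1l (by decide)
attribute [simp] a1_mul_a2
@[simp] lemma a1_mul_pB : (a1 : A2 K) * pB = 0 := mul_eq_zero_mismatch a1r pBl (by decide)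
@[simp] lemma a1_mul_qB : (a1 : A2 K) * qB = 0 := by
  rw [qB, ← mul_assoc, a1_mul_a2, zero_mul]
@[simp] lemma a2_mul_gg : (a2 : A2 K) * gg = qB := rfl
attribute [simp] a2_mul_bb
@[simp] lemma a2_mul_a1 : (a2 : A2 K) * a1 = 0 := mul_eq_zero_mismatch a2r a1l (by decide)
@[simp] lemma a2_mul_a2 : (a2 : A2 K) * a2 = 0 := mul_eq_zero_mismatch a2r a2l (by decide)
@[simp] lemma a2_mul_pB : (a2 : A2 K) * pB = 0 := by
  rw [pB, ← mul_assoc, a2_mul_bb, zero_mul]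
@[simp] lemma a2_mul_qB : (a2 : A2 K) * qB = 0 := mul_eq_zero_mismatch a2r qBl (by decide)
@[simp] lemma pB_mul_bb : (pB : A2 K) * bb = 0 := mul_eq_zero_mismatch pBr bbl (by decide)
@[simp] lemma pB_mul_gg : (pB : A2 K) * gg = 0 := mul_eq_zero_mismatch pBr ggl (by decide)
@[simp] lemma pB_mul_a1 : (pB : A2 K) * a1 = 0 := mul_eq_zero_mismatch pBr a1l (by decide)
@[simp] lemma pB_mul_a2 : (pB : A2 K) * a2 = 0 := by
  rw [pB, mul_assoc, a1_mul_a2, mul_zero]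
@[simp] lemma pB_mul_pB : (pB : A2 K) * pB = 0 := mul_eq_zero_mismatch pBr pBl (by decide)
@[simp] lemma pB_mul_qB : (pB : A2 K) * qB = 0 := by
  rw [qB, ← mul_assoc, pB_mul_a2, zero_mul]
@[simp] lemma qB_mul_bb : (qB : A2 K) * bb = 0 := mul_eq_zero_mismatch qBr bbl (by decide)
@[simp] lemma qB_mul_gg : (qB : A2 K) * gg = 0 := mul_eq_zero_mismatch qBr ggl (by decide)
@[simp] lemma qB_mul_a1 : (qB : A2 K) * a1 = 0 := by
  rw [qB, mul_assoc, gg_mul_a1, mul_zero]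
@[simp] lemma qB_mul_a2 : (qB : A2 K) * a2 = 0 := mul_eq_zero_mismatch qBr a2l (by decide)
@[simp] lemma qB_mul_pB : (qB : A2 K) * pB = 0 := mul_eq_zero_mismatch qBr pBl (by decide)
@[simp] lemma qB_mul_qB : (qB : A2 K) * qB = 0 := mul_eq_zero_mismatch qBr qBl (by decide)

end products

end A2
namespace A2

variable {K : Type*} [Field K]

/-- The nine monomials spanning `A₂`. -/
noncomputable def mono (n : Fin 9) : A2 K :=
  if n.val = 0 then ee K 0 else if n.val = 1 then ee K 1 else if n.val = 2 then ee K 2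
  else if n.val = 3 then bb else if n.val = 4 then gg else if n.val = 5 then a1
  else if n.val = 6 then a2 else if n.val = 7 then pB else qB

/-- The span of the nine monomials. -/
noncomputable def V : Submodule K (A2 K) := Submodule.span K (Set.range (mono (K := K)))

lemma mono_mem_V (n : Fin 9) : mono (K := K) n ∈ V := Submodule.subset_span ⟨n, rfl⟩

lemma ee_mem_V (i : Fin 3) : ee K i ∈ V (K := K) := by
  fin_cases i
  · simpa [mono] using mono_mem_V (K := K) 0
  · simpa [mono] using mono_mem_V (K := K) 1
  · simpa [mono] using mono_mem_V (K := K) 2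

lemma one_mem_V : (1 : A2 K) ∈ V := by
  rw [← ee_sum]; exact add_mem (add_mem (ee_mem_V 0) (ee_mem_V 1)) (ee_mem_V 2)

lemma mono_mul_mono (n m : Fin 9) : mono (K := K) n * mono m ∈ V := by
  have h0 : (0 : A2 K) ∈ V := zero_mem _
  have h3 : (bb : A2 K) ∈ V := by simpa [mono] using mono_mem_V (K := K) 3
  have h4 : (gg : A2 K) ∈ V := by simpa [mono] using mono_mem_V (K := K) 4
  have h5 : (a1 : A2 K) ∈ V := by simpa [mono] using mono_mem_V (K := K) 5
  have h6 : (a2 : A2 K) ∈ V := by simpa [mono] using mono_mem_V (K := K) 6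
  have h7 : (pB : A2 K) ∈ V := by simpa [mono] using mono_mem_V (K := K) 7
  have h8 : (qB : A2 K) ∈ V := by simpa [mono] using mono_mem_V (K := K) 8
  fin_cases n <;> fin_cases m <;>
    (try simp [mono, ee_mul_ee]) <;>
    first
      | exact h0
      | exact ee_mem_V _
      | exact h3 | exact h4 | exact h5 | exact h6 | exact h7 | exact h8

lemma mul_mem_V {u v : A2 K} (hu : u ∈ V) (hv : v ∈ V) : u * v ∈ V := by
  have step1 : ∀ n : Fin 9, ∀ w ∈ V (K := K), mono n * w ∈ V := by
    intro n w hw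
    have hle : V (K := K) ≤ Submodule.comap (LinearMap.mulLeft K (mono n)) V :=
      Submodule.span_le.2 (by rintro _ ⟨m, rfl⟩; exact mono_mul_mono n m)
    exact hle hw
  have hle : V (K := K) ≤ Submodule.comap (LinearMap.mulRight K v) V :=
    Submodule.span_le.2 (by rintro _ ⟨n, rfl⟩; exact step1 n v hv)
  exact hle hu

lemma mem_V (a : A2 K) : a ∈ V := by
  obtain ⟨x, rfl⟩ := RingQuot.mkAlgHom_surjective K (A2Rel K) a
  induction x using FreeAlgebra.induction with
  | grade0 r =>
      rw [AlgHom.commutes, Algebra.algebraMap_eq_smul_one]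
      exact Submodule.smul_mem _ _ one_mem_V
  | grade1 g =>
      cases g with
      | e i => exact ee_mem_V i
      | β => exact (by simpa [mono, bb, gen] using mono_mem_V (K := K) 3)
      | γ => exact (by simpa [mono, gg, gen] using mono_mem_V (K := K) 4)
      | α₁ => exact (by simpa [mono, a1, gen] using mono_mem_V (K := K) 5)
      | α₂ => exact (by simpa [mono, a2, gen] using mono_mem_V (K := K) 6)
  | mul x y hx hy => rw [map_mul]; exact mul_mem_V hx hy
  | add x y hx hy => rw [map_add]; exact add_mem hx hy

end A2
namespace A2

variable {K : Type*} [Field K]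

lemma corner12_mem (a : A2 K) :
    (ee K 0 + ee K 1) * a * (ee K 0 + ee K 1) ∈
      Submodule.span K ({ee K 0, ee K 1, a2, pB} : Set (A2 K)) := by
  have hle : V (K := K) ≤ Submodule.comap
      ((LinearMap.mulRight K (ee K 0 + ee K 1)).comp
        (LinearMap.mulLeft K (ee K 0 + ee K 1)))
      (Submodule.span K ({ee K 0, ee K 1, a2, pB} : Set (A2 K))) := by
    apply Submodule.span_le.2
    rintro _ ⟨n, rfl⟩
    simp only [SetLike.mem_coe, Submodule.mem_comap, LinearMap.comp_apply,
      LinearMap.mulLeft_apply, LinearMap.mulRight_apply]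
    fin_cases n <;>
      (try simp [mono, mul_add, add_mul, ee_mul_ee]) <;>
      first
        | exact zero_mem _
        | exact Submodule.subset_span (by simp)
  have := hle (mem_V a)
  simpa using this

lemma corner23_mem (a : A2 K) :
    (ee K 1 + ee K 2) * a * (ee K 1 + ee K 2) ∈
      Submodule.span K ({ee K 1, ee K 2, a1, qB} : Set (A2 K)) := by
  have hle : V (K := K) ≤ Submodule.comap
      ((LinearMap.mulRight K (ee K 1 + ee K 2)).comp
        (LinearMap.mulLeft K (ee K 1 + ee K 2)))
      (Submodule.span K ({ee K 1, ee K 2, a1, qB} : Set (A2 K))) := by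
    apply Submodule.span_le.2
    rintro _ ⟨n, rfl⟩
    simp only [SetLike.mem_coe, Submodule.mem_comap, LinearMap.comp_apply,
      LinearMap.mulLeft_apply, LinearMap.mulRight_apply]
    fin_cases n <;>
      (try simp [mono, mul_add, add_mul, ee_mul_ee]) <;>
      first
        | exact zero_mem _
        | exact Submodule.subset_span (by simp)
  have := hle (mem_V a)
  simpa using this

/-! ### A faithful-enough matrix representation of `A₂` (the regular representation). -/

/-- Elementary matrix. -/
def N (i j : Fin 9) : Matrix (Fin 9) (Fin 9) K := Matrix.single i j 1

lemma N_mul_N (i j k l : Fin 9) : (N i j : Matrix (Fin 9) (Fin 9) K) * N k l =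
    if j = k then N i l else 0 := by
  by_cases h : j = k
  · subst h; simp [N]
  · simp [N, Matrix.single_mul_single_of_ne (h := h), h]

/-- Image of `e₁`. -/
def M0 : Matrix (Fin 9) (Fin 9) K := N 0 0 + N 4 4 + N 6 6 + N 7 7
/-- Image of `e₂`. -/
def M1 : Matrix (Fin 9) (Fin 9) K := N 1 1 + N 2 2 + N 8 8
/-- Image of `e₃`. -/
def M2 : Matrix (Fin 9) (Fin 9) K := N 3 3 + N 5 5
/-- Image of `β`. -/
def Mb : Matrix (Fin 9) (Fin 9) K := N 4 3 + N 6 5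
/-- Image of `γ`. -/
def Mg : Matrix (Fin 9) (Fin 9) K := N 7 5
/-- Image of `α₁`. -/
def Ma1 : Matrix (Fin 9) (Fin 9) K := N 3 2
/-- Image of `α₂`. -/
def Ma2 : Matrix (Fin 9) (Fin 9) K := N 1 0 + N 8 7

/-- Images of the generators. -/
def MG : A2Gen → Matrix (Fin 9) (Fin 9) K
  | .e i => if i.val = 0 then M0 else if i.val = 1 then M1 else M2
  | .β => Mb
  | .γ => Mg
  | .α₁ => Ma1
  | .α₂ => Ma2

lemma Msum : (M0 + M1 + M2 : Matrix (Fin 9) (Fin 9) K) = 1 := by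
  ext i j
  fin_cases i <;> fin_cases j <;>
    simp [M0, M1, M2, N, Matrix.one_apply]

set_option maxRecDepth 4000 in
/-- The representation `Ψ : A₂ → M₉(K)`. -/
noncomputable def Ψ : A2 K →ₐ[K] Matrix (Fin 9) (Fin 9) K :=
  RingQuot.liftAlgHom K
    ⟨FreeAlgebra.lift K (MG (K := K)), by
      rintro x y h
      induction h with
      | orth i j =>
          fin_cases i <;> fin_cases j <;>
            simp [map_mul, FreeAlgebra.lift_ι_apply, MG, M0, M1, M2, N_mul_N,
              add_mul, mul_add]
      | sum =>
          simp only [map_add, map_one, FreeAlgebra.lift_ι_apply, MG]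
          simpa using Msum (K := K)
      | beta =>
          simp only [map_mul, FreeAlgebra.lift_ι_apply, MG]
          simp [M0, M2, Mb, N_mul_N, add_mul, mul_add]
      | gamma =>
          simp only [map_mul, FreeAlgebra.lift_ι_apply, MG]
          simp [M0, M2, Mg, N_mul_N, add_mul, mul_add]
      | alpha₂ =>
          simp only [map_mul, FreeAlgebra.lift_ι_apply, MG]
          simp [M0, M1, Ma2, N_mul_N, add_mul, mul_add]
      | alpha₁ =>
          simp only [map_mul, FreeAlgebra.lift_ι_apply, MG]
          simp [M1, M2, Ma1, N_mul_N, add_mul, mul_add]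
      | rel₁ =>
          simp only [map_mul, FreeAlgebra.lift_ι_apply, MG, map_zero]
          simp [Ma2, Mb, N_mul_N, add_mul, mul_add]
      | rel₂ =>
          simp only [map_mul, FreeAlgebra.lift_ι_apply, MG, map_zero]
          simp [Mg, Ma1, N_mul_N, add_mul, mul_add]
      | rel₃ =>
          simp only [map_mul, FreeAlgebra.lift_ι_apply, MG, map_zero]
          simp [Ma1, Ma2, N_mul_N, add_mul, mul_add]⟩

lemma psi_gen (g : A2Gen) : Ψ (gen K g) = MG (K := K) g := by
  simp [Ψ, gen, RingQuot.liftAlgHom_mkAlgHom_apply, FreeAlgebra.lift_ι_apply]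

lemma psi_ee0 : Ψ (ee K 0) = M0 := by simpa [MG, ee] using psi_gen (K := K) (A2Gen.e 0)
lemma psi_ee1 : Ψ (ee K 1) = M1 := by simpa [MG, ee] using psi_gen (K := K) (A2Gen.e 1)
lemma psi_ee2 : Ψ (ee K 2) = M2 := by simpa [MG, ee] using psi_gen (K := K) (A2Gen.e 2)
lemma psi_bb : Ψ (bb : A2 K) = Mb := psi_gen A2Gen.β
lemma psi_gg : Ψ (gg : A2 K) = Mg := psi_gen A2Gen.γ
lemma psi_a1 : Ψ (a1 : A2 K) = Ma1 := psi_gen A2Gen.α₁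
lemma psi_a2 : Ψ (a2 : A2 K) = Ma2 := psi_gen A2Gen.α₂
lemma psi_pB : Ψ (pB : A2 K) = N 4 2 := by
  rw [pB, map_mul, psi_bb, psi_a1]
  simp [Mb, Ma1, N_mul_N, add_mul, mul_add]
lemma psi_qB : Ψ (qB : A2 K) = N 8 5 := by
  rw [qB, map_mul, psi_a2, psi_gg]
  simp [Ma2, Mg, N_mul_N, add_mul, mul_add]

end A2
/-! ### Basic structure of the algebra `C` -/

namespace CAux

variable {K : Type*} [Field K]

/-- Image of a generator in `C`. -/
noncomputable def genC (g : CGen) : Calg K := RingQuot.mkAlgHom K (CRel K) (FreeAlgebra.ι K g)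

/-- The idempotents of `C`. -/
noncomputable def ff (i : Fin 2) : Calg K := genC (CGen.f i)
/-- The arrow `x` of `C`. -/
noncomputable def xx : Calg K := genC CGen.x
/-- The arrow `y` of `C`. -/
noncomputable def yy : Calg K := genC CGen.y

lemma relC_eq {x y : FreeAlgebra K CGen} (h : CRel K x y) :
    RingQuot.mkAlgHom K (CRel K) x = RingQuot.mkAlgHom K (CRel K) y :=
  RingQuot.mkAlgHom_rel K h

lemma ff_mul_ff (i j : Fin 2) : ff (K := K) i * ff j = if i = j then ff i else 0 := by
  simpa [genC, ff, apply_ite, map_mul] using relC_eq (CRel.orth (k := K) i j)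

lemma ff_sum : (ff (K := K) 0 + ff 1) = 1 := by
  simpa [genC, ff, map_add] using relC_eq (CRel.sum (k := K))

lemma sandwich_xx : ff (K := K) 1 * xx * ff 0 = xx := by
  simpa [genC, ff, xx, map_mul] using relC_eq (CRel.hx (k := K))

lemma sandwich_yy : ff (K := K) 0 * yy * ff 1 = yy := by
  simpa [genC, ff, yy, map_mul] using relC_eq (CRel.hy (k := K))

@[simp] lemma xx_mul_yy : (xx : Calg K) * yy = 0 := by
  simpa [genC, xx, yy, map_mul] using relC_eq (CRel.hxy (k := K))

@[simp] lemma yy_mul_xx : (yy : Calg K) * xx = 0 := by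
  simpa [genC, xx, yy, map_mul] using relC_eq (CRel.hyx (k := K))

private lemma ff_mul_of_sandwich {z : Calg K} {s t : Fin 2}
    (h : ff (K := K) t * z * ff s = z) (i : Fin 2) :
    ff (K := K) i * z = if i = t then z else 0 := by
  conv_lhs => rw [← h]
  rw [← mul_assoc, ← mul_assoc, ff_mul_ff]
  by_cases hi : i = t
  · rw [if_pos hi, if_pos hi, hi]; exact h
  · rw [if_neg hi, if_neg hi, zero_mul, zero_mul]

private lemma mul_ff_of_sandwich {z : Calg K} {s t : Fin 2}
    (h : ff (K := K) t * z * ff s = z) (j : Fin 2) :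
    z * ff j = if j = s then z else 0 := by
  conv_lhs => rw [← h]
  rw [mul_assoc, ff_mul_ff]
  by_cases hj : s = j
  · rw [if_pos hj, if_pos hj.symm]; exact h
  · rw [if_neg hj, if_neg (fun hh => hj hh.symm), mul_zero]

@[simp] lemma ff_mul_xx (i : Fin 2) : ff (K := K) i * xx = if i = 1 then xx else 0 :=
  ff_mul_of_sandwich sandwich_xx i

@[simp] lemma xx_mul_ff (j : Fin 2) : (xx : Calg K) * ff j = if j = 0 then xx else 0 :=
  mul_ff_of_sandwich sandwich_xx j

@[simp] lemma ff_mul_yy (i : Fin 2) : ff (K := K) i * yy = if i = 0 then yy else 0 :=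
  ff_mul_of_sandwich sandwich_yy i

@[simp] lemma yy_mul_ff (j : Fin 2) : (yy : Calg K) * ff j = if j = 1 then yy else 0 :=
  mul_ff_of_sandwich sandwich_yy j

private lemma mulC_eq_zero_mismatch {z w : Calg K} {n m : Fin 2}
    (h1 : z * ff n = z) (h2 : ff (K := K) m * w = w) (hnm : n ≠ m) : z * w = 0 := by
  rw [← h1, ← h2, mul_assoc, ← mul_assoc (ff n), ff_mul_ff, if_neg hnm, zero_mul, mul_zero]

@[simp] lemma xx_mul_xx : (xx : Calg K) * xx = 0 :=
  mulC_eq_zero_mismatch (n := 0) (m := 1) (by simp) (by simp) (by decide)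

@[simp] lemma yy_mul_yy : (yy : Calg K) * yy = 0 :=
  mulC_eq_zero_mismatch (n := 1) (m := 0) (by simp) (by simp) (by decide)

/-- The four monomials spanning `C`. -/
noncomputable def monoC (n : Fin 4) : Calg K :=
  if n.val = 0 then ff 0 else if n.val = 1 then ff 1 else if n.val = 2 then xx else yy

/-- The span of the four monomials. -/
noncomputable def VC : Submodule K (Calg K) := Submodule.span K (Set.range (monoC (K := K)))

lemma monoC_mem_VC (n : Fin 4) : monoC (K := K) n ∈ VC := Submodule.subset_span ⟨n, rfl⟩

lemma ff_mem_VC (i : Fin 2) : ff (K := K) i ∈ VC := by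
  fin_cases i
  · simpa [monoC] using monoC_mem_VC (K := K) 0
  · simpa [monoC] using monoC_mem_VC (K := K) 1

lemma one_mem_VC : (1 : Calg K) ∈ VC := by
  rw [← ff_sum]; exact add_mem (ff_mem_VC 0) (ff_mem_VC 1)

lemma monoC_mul_monoC (n m : Fin 4) : monoC (K := K) n * monoC m ∈ VC := by
  have h0 : (0 : Calg K) ∈ VC := zero_mem _
  have h2 : (xx : Calg K) ∈ VC := by simpa [monoC] using monoC_mem_VC (K := K) 2
  have h3 : (yy : Calg K) ∈ VC := by simpa [monoC] using monoC_mem_VC (K := K) 3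
  fin_cases n <;> fin_cases m <;>
    (try simp [monoC, ff_mul_ff]) <;>
    first
      | exact h0
      | exact ff_mem_VC _
      | exact h2 | exact h3

lemma mul_mem_VC {u v : Calg K} (hu : u ∈ VC) (hv : v ∈ VC) : u * v ∈ VC := by
  have step1 : ∀ n : Fin 4, ∀ w ∈ VC (K := K), monoC n * w ∈ VC := by
    intro n w hw
    have hle : VC (K := K) ≤ Submodule.comap (LinearMap.mulLeft K (monoC n)) VC :=
      Submodule.span_le.2 (by rintro _ ⟨m, rfl⟩; exact monoC_mul_monoC n m)
    exact hle hw
  have hle : VC (K := K) ≤ Submodule.comap (LinearMap.mulRight K v) VC :=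
    Submodule.span_le.2 (by rintro _ ⟨n, rfl⟩; exact step1 n v hv)
  exact hle hu

lemma mem_VC (a : Calg K) : a ∈ VC := by
  obtain ⟨x, rfl⟩ := RingQuot.mkAlgHom_surjective K (CRel K) a
  induction x using FreeAlgebra.induction with
  | grade0 r =>
      rw [AlgHom.commutes, Algebra.algebraMap_eq_smul_one]
      exact Submodule.smul_mem _ _ one_mem_VC
  | grade1 g =>
      cases g with
      | f i => exact ff_mem_VC i
      | x => exact (by simpa [monoC, xx, genC] using monoC_mem_VC (K := K) 2)
      | y => exact (by simpa [monoC, yy, genC] using monoC_mem_VC (K := K) 3)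
  | mul x y hx hy => rw [map_mul]; exact mul_mem_VC hx hy
  | add x y hx hy => rw [map_add]; exact add_mem hx hy

lemma spanC (a : Calg K) :
    ∃ c : Fin 4 → K, a = c 0 • ff 0 + c 1 • ff 1 + c 2 • xx + c 3 • yy := by
  have h := mem_VC a
  rw [VC, Submodule.mem_span_range_iff_exists_fun] at h
  obtain ⟨c, hc⟩ := h
  refine ⟨c, ?_⟩
  rw [← hc, Fin.sum_univ_four]
  simp [monoC, show ((0 : Fin 4) : ℕ) = 0 from rfl, show ((1 : Fin 4) : ℕ) = 1 from rfl,
    show ((2 : Fin 4) : ℕ) = 2 from rfl, show ((3 : Fin 4) : ℕ) = 3 from rfl]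

end CAux
namespace A2

open CAux

variable {K : Type*} [Field K]

@[simp] lemma corner_val_add {A : Type*} [Ring A] {E : Idem A} (x y : Corner E) :
    (x + y).1 = x.1 + y.1 := rfl

@[simp] lemma corner_val_zero {A : Type*} [Ring A] {E : Idem A} :
    (0 : Corner E).1 = 0 := rfl

@[simp] lemma corner_val_smul {A R : Type*} [Ring A] [CommSemiring R] [Algebra R A]
    {E : Idem A} (c : R) (x : Corner E) : (c • x).1 = c • x.1 := rfl

@[simp] lemma corner_val_mul {A : Type*} [Ring A] {E : Idem A} (x y : Corner E) :
    (x * y).1 = x.1 * y.1 := rfl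

@[simp] lemma N_apply (i j a b : Fin 9) :
    (N i j : Matrix (Fin 9) (Fin 9) K) a b = if i = a ∧ j = b then 1 else 0 := by
  by_cases h : i = a ∧ j = b
  · obtain ⟨rfl, rfl⟩ := h; simp [N]
  · simp [N, Matrix.single_apply_of_ne (h := h), h]

/-! ### The corner at `e₁ + e₂` -/

/-- `e₁` as element of the corner. -/
noncomputable def cE0 : Corner (E12 K) :=
  ⟨ee K 0, by simp [E12, mul_add, add_mul, ee_mul_ee]⟩

/-- `e₂` as element of the corner. -/
noncomputable def cE1 : Corner (E12 K) :=
  ⟨ee K 1, by simp [E12, mul_add, add_mul, ee_mul_ee]⟩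

/-- `α₂` as element of the corner. -/
noncomputable def cX12 : Corner (E12 K) :=
  ⟨a2, by simp [E12, mul_add, add_mul]⟩

/-- `β α₁` as element of the corner. -/
noncomputable def cY12 : Corner (E12 K) :=
  ⟨pB, by simp [E12, mul_add, add_mul]⟩

/-- Images of the generators of `C` in the corner. -/
noncomputable def FC12 : CGen → Corner (E12 K)
  | .f i => if i = 0 then cE0 else cE1
  | .x => cX12
  | .y => cY12

/-- The isomorphism `C ≃ e A₂ e` for `e = e₁ + e₂`, as an algebra hom. -/
noncomputable def Φ12 : Calg K →ₐ[K] Corner (E12 K) :=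
  RingQuot.liftAlgHom K
    ⟨FreeAlgebra.lift K (FC12 (K := K)), by
      rintro x y h
      induction h with
      | orth i j =>
          fin_cases i <;> fin_cases j <;>
            (simp only [map_mul, map_zero, FreeAlgebra.lift_ι_apply, FC12]; norm_num) <;>
            (apply Subtype.ext; simp only [corner_val_mul]; simp [FC12, cE0, cE1, ee_mul_ee])
      | sum =>
          simp only [map_add, map_one, FreeAlgebra.lift_ι_apply, FC12]
          norm_num
          apply Subtype.ext
          simp [cE0, cE1]
          rfl
      | hx =>
          simp only [map_mul, FreeAlgebra.lift_ι_apply, FC12]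
          norm_num
          apply Subtype.ext
          simp only [corner_val_mul]
          simp [cE0, cE1, cX12]
      | hy =>
          simp only [map_mul, FreeAlgebra.lift_ι_apply, FC12]
          norm_num
          apply Subtype.ext
          simp only [corner_val_mul]
          simp [cE0, cE1, cY12]
      | hxy =>
          simp only [map_mul, map_zero, FreeAlgebra.lift_ι_apply, FC12]
          apply Subtype.ext
          simp only [corner_val_mul]
          simp [cX12, cY12]
      | hyx =>
          simp only [map_mul, map_zero, FreeAlgebra.lift_ι_apply, FC12]
          apply Subtype.ext
          simp only [corner_val_mul]
          simp [cX12, cY12]⟩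

lemma Φ12_ff0 : Φ12 (ff (K := K) 0) = cE0 := by
  simp [Φ12, ff, genC, RingQuot.liftAlgHom_mkAlgHom_apply, FreeAlgebra.lift_ι_apply, FC12]

lemma Φ12_ff1 : Φ12 (ff (K := K) 1) = cE1 := by
  simp [Φ12, ff, genC, RingQuot.liftAlgHom_mkAlgHom_apply, FreeAlgebra.lift_ι_apply, FC12]

lemma Φ12_xx : Φ12 (xx : Calg K) = cX12 := by
  simp [Φ12, xx, genC, RingQuot.liftAlgHom_mkAlgHom_apply, FreeAlgebra.lift_ι_apply, FC12]

lemma Φ12_yy : Φ12 (yy : Calg K) = cY12 := by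
  simp [Φ12, yy, genC, RingQuot.liftAlgHom_mkAlgHom_apply, FreeAlgebra.lift_ι_apply, FC12]

/-- The subtype inclusion of the corner, as a linear map. -/
noncomputable def valL (E : Idem (A2 K)) : Corner E →ₗ[K] A2 K :=
  ⟨⟨fun z => z.1, fun _ _ => rfl⟩, fun _ _ => rfl⟩

lemma Φ12_surjective : Function.Surjective (Φ12 (K := K)) := by
  intro z
  have hz : z.1 ∈ Submodule.span K ({ee K 0, ee K 1, a2, pB} : Set (A2 K)) := by
    have h := corner12_mem (K := K) z.1
    have h2 := z.2
    simp only [E12] at h2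
    rwa [h2] at h
  have himg : (valL (E12 K)) '' ({cE0, cE1, cX12, cY12} : Set (Corner (E12 K))) =
      ({ee K 0, ee K 1, a2, pB} : Set (A2 K)) := by
    simp only [Set.image_insert_eq, Set.image_singleton]
    rfl
  have hmap : z.1 ∈ Submodule.map (valL (E12 K))
      (Submodule.span K ({cE0, cE1, cX12, cY12} : Set (Corner (E12 K)))) := by
    rw [Submodule.map_span, himg]; exact hz
  obtain ⟨w, hwW, hwv⟩ := hmap
  have hwz : w = z := Subtype.ext hwv
  subst hwz
  have hle : Submodule.span K ({cE0, cE1, cX12, cY12} : Set (Corner (E12 K))) ≤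
      Subalgebra.toSubmodule (Φ12 (K := K)).range := by
    apply Submodule.span_le.2
    rintro w hw
    simp only [Set.mem_insert_iff, Set.mem_singleton_iff] at hw
    rcases hw with rfl | rfl | rfl | rfl
    · exact ⟨ff 0, Φ12_ff0⟩
    · exact ⟨ff 1, Φ12_ff1⟩
    · exact ⟨xx, Φ12_xx⟩
    · exact ⟨yy, Φ12_yy⟩
  exact hle hwW

lemma Φ12_injective : Function.Injective (Φ12 (K := K)) := by
  rw [injective_iff_map_eq_zero]
  intro a ha
  obtain ⟨c, rfl⟩ := spanC a
  rw [map_add, map_add, map_add, map_smul, map_smul, map_smul, map_smul,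
    Φ12_ff0, Φ12_ff1, Φ12_xx, Φ12_yy] at ha
  have h2 := congrArg Subtype.val ha
  simp only [corner_val_add, corner_val_smul, corner_val_zero] at h2
  simp only [cE0, cE1, cX12, cY12] at h2
  have h3 := congrArg (Ψ (K := K)) h2
  simp only [map_add, map_smul, map_zero, psi_ee0, psi_ee1, psi_a2, psi_pB] at h3
  have hc0 : c 0 = 0 := by
    have := congrFun (congrFun h3 0) 0
    simpa [M0, M1, Ma2, Matrix.add_apply, Matrix.smul_apply] using this
  have hc1 : c 1 = 0 := by
    have := congrFun (congrFun h3 1) 1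
    simpa [M0, M1, Ma2, Matrix.add_apply, Matrix.smul_apply] using this
  have hc2 : c 2 = 0 := by
    have := congrFun (congrFun h3 1) 0
    simpa [M0, M1, Ma2, Matrix.add_apply, Matrix.smul_apply] using this
  have hc3 : c 3 = 0 := by
    have := congrFun (congrFun h3 4) 2
    simpa [M0, M1, Ma2, Matrix.add_apply, Matrix.smul_apply] using this
  simp [hc0, hc1, hc2, hc3]

/-! ### The corner at `e₂ + e₃` -/

/-- `e₂` as element of the corner. -/
noncomputable def dE0 : Corner (E23 K) :=
  ⟨ee K 1, by simp [E23, mul_add, add_mul, ee_mul_ee]⟩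

/-- `e₃` as element of the corner. -/
noncomputable def dE1 : Corner (E23 K) :=
  ⟨ee K 2, by simp [E23, mul_add, add_mul, ee_mul_ee]⟩

/-- `α₁` as element of the corner. -/
noncomputable def dX : Corner (E23 K) :=
  ⟨a1, by simp [E23, mul_add, add_mul]⟩

/-- `α₂ γ` as element of the corner. -/
noncomputable def dY : Corner (E23 K) :=
  ⟨qB, by simp [E23, mul_add, add_mul]⟩

/-- Images of the generators of `C` in the corner. -/
noncomputable def FC23 : CGen → Corner (E23 K)
  | .f i => if i = 0 then dE0 else dE1
  | .x => dX
  | .y => dY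

/-- The isomorphism `C ≃ e A₂ e` for `e = e₂ + e₃`, as an algebra hom. -/
noncomputable def Φ23 : Calg K →ₐ[K] Corner (E23 K) :=
  RingQuot.liftAlgHom K
    ⟨FreeAlgebra.lift K (FC23 (K := K)), by
      rintro x y h
      induction h with
      | orth i j =>
          fin_cases i <;> fin_cases j <;>
            (simp only [map_mul, map_zero, FreeAlgebra.lift_ι_apply, FC23]; norm_num) <;>
            (apply Subtype.ext; simp only [corner_val_mul]; simp [FC23, dE0, dE1, ee_mul_ee])
      | sum =>
          simp only [map_add, map_one, FreeAlgebra.lift_ι_apply, FC23]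
          norm_num
          apply Subtype.ext
          simp [dE0, dE1]
          rfl
      | hx =>
          simp only [map_mul, FreeAlgebra.lift_ι_apply, FC23]
          norm_num
          apply Subtype.ext
          simp only [corner_val_mul]
          simp [dE0, dE1, dX]
      | hy =>
          simp only [map_mul, FreeAlgebra.lift_ι_apply, FC23]
          norm_num
          apply Subtype.ext
          simp only [corner_val_mul]
          simp [dE0, dE1, dY]
      | hxy =>
          simp only [map_mul, map_zero, FreeAlgebra.lift_ι_apply, FC23]
          apply Subtype.ext
          simp only [corner_val_mul]
          simp [dX, dY]
      | hyx =>
          simp only [map_mul, map_zero, FreeAlgebra.lift_ι_apply, FC23]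
          apply Subtype.ext
          simp only [corner_val_mul]
          simp [dX, dY]⟩

lemma Φ23_ff0 : Φ23 (ff (K := K) 0) = dE0 := by
  simp [Φ23, ff, genC, RingQuot.liftAlgHom_mkAlgHom_apply, FreeAlgebra.lift_ι_apply, FC23]

lemma Φ23_ff1 : Φ23 (ff (K := K) 1) = dE1 := by
  simp [Φ23, ff, genC, RingQuot.liftAlgHom_mkAlgHom_apply, FreeAlgebra.lift_ι_apply, FC23]

lemma Φ23_xx : Φ23 (xx : Calg K) = dX := by
  simp [Φ23, xx, genC, RingQuot.liftAlgHom_mkAlgHom_apply, FreeAlgebra.lift_ι_apply, FC23]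

lemma Φ23_yy : Φ23 (yy : Calg K) = dY := by
  simp [Φ23, yy, genC, RingQuot.liftAlgHom_mkAlgHom_apply, FreeAlgebra.lift_ι_apply, FC23]

lemma Φ23_surjective : Function.Surjective (Φ23 (K := K)) := by
  intro z
  have hz : z.1 ∈ Submodule.span K ({ee K 1, ee K 2, a1, qB} : Set (A2 K)) := by
    have h := corner23_mem (K := K) z.1
    have h2 := z.2
    simp only [E23] at h2
    rwa [h2] at h
  have himg : (valL (E23 K)) '' ({dE0, dE1, dX, dY} : Set (Corner (E23 K))) =
      ({ee K 1, ee K 2, a1, qB} : Set (A2 K)) := by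
    simp only [Set.image_insert_eq, Set.image_singleton]
    rfl
  have hmap : z.1 ∈ Submodule.map (valL (E23 K))
      (Submodule.span K ({dE0, dE1, dX, dY} : Set (Corner (E23 K)))) := by
    rw [Submodule.map_span, himg]; exact hz
  obtain ⟨w, hwW, hwv⟩ := hmap
  have hwz : w = z := Subtype.ext hwv
  subst hwz
  have hle : Submodule.span K ({dE0, dE1, dX, dY} : Set (Corner (E23 K))) ≤
      Subalgebra.toSubmodule (Φ23 (K := K)).range := by
    apply Submodule.span_le.2
    rintro w hw
    simp only [Set.mem_insert_iff, Set.mem_singleton_iff] at hw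
    rcases hw with rfl | rfl | rfl | rfl
    · exact ⟨ff 0, Φ23_ff0⟩
    · exact ⟨ff 1, Φ23_ff1⟩
    · exact ⟨xx, Φ23_xx⟩
    · exact ⟨yy, Φ23_yy⟩
  exact hle hwW

lemma Φ23_injective : Function.Injective (Φ23 (K := K)) := by
  rw [injective_iff_map_eq_zero]
  intro a ha
  obtain ⟨c, rfl⟩ := spanC a
  rw [map_add, map_add, map_add, map_smul, map_smul, map_smul, map_smul,
    Φ23_ff0, Φ23_ff1, Φ23_xx, Φ23_yy] at ha
  have h2 := congrArg Subtype.val ha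
  simp only [corner_val_add, corner_val_smul, corner_val_zero] at h2
  simp only [dE0, dE1, dX, dY] at h2
  have h3 := congrArg (Ψ (K := K)) h2
  simp only [map_add, map_smul, map_zero, psi_ee1, psi_ee2, psi_a1, psi_qB] at h3
  have hc0 : c 0 = 0 := by
    have := congrFun (congrFun h3 1) 1
    simpa [M1, M2, Ma1, Matrix.add_apply, Matrix.smul_apply] using this
  have hc1 : c 1 = 0 := by
    have := congrFun (congrFun h3 3) 3
    simpa [M1, M2, Ma1, Matrix.add_apply, Matrix.smul_apply] using this
  have hc2 : c 2 = 0 := by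
    have := congrFun (congrFun h3 3) 2
    simpa [M1, M2, Ma1, Matrix.add_apply, Matrix.smul_apply] using this
  have hc3 : c 3 = 0 := by
    have := congrFun (congrFun h3 8) 5
    simpa [M1, M2, Ma1, Matrix.add_apply, Matrix.smul_apply] using this
  simp [hc0, hc1, hc2, hc3]

end A2

/-- For `e = e₁ + e₂ ∈ A₂` the corner algebra `eA₂e` is isomorphic to
`C` as a `k`-algebra, and likewise for `e = e₂ + e₃ ∈ A₂`. -/
theorem stmt7 :
    Nonempty (Corner (A2.E12 k) ≃ₐ[k] Calg k) ∧
    Nonempty (Corner (A2.E23 k) ≃ₐ[k] Calg k) :=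
  ⟨⟨(AlgEquiv.ofBijective A2.Φ12 ⟨A2.Φ12_injective, A2.Φ12_surjective⟩).symm⟩,
   ⟨(AlgEquiv.ofBijective A2.Φ23 ⟨A2.Φ23_injective, A2.Φ23_surjective⟩).symm⟩⟩
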